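/- If S is an invertible n×n equiangular matrix with parameter α ∈ (0,1) and s'_i denotes the i-th row of S⁻¹, then the cosine of the angle between the i-th column s_i of S and the vector s'_iᵀ equals 1/√β, where β = (1+(n-2)α)/((1-α)(1+(n-1)α)). -/

import Mathlib

open Matrix
open scoped RealInnerProductSpace

noncomputable def Gmat (n : ℕ) (α : ℝ) : Matrix (Fin n) (Fin n) ℝ :=
  (1 - α) • (1 : Matrix (Fin n) (Fin n) ℝ) + α • (Matrix.of fun _ _ => (1 : ℝ))

noncomputable def invRow (n : ℕ) (S : Matrix (Fin n) (Fin n) ℝ) (i : Fin n) :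
    EuclideanSpace ℝ (Fin n) :=
  (WithLp.equiv 2 (Fin n → ℝ)).symm (fun k => S⁻¹ i k)

/-- The `i`-th column of `S`, as a vector of Euclidean space. -/
noncomputable def colVec (n : ℕ) (S : Matrix (Fin n) (Fin n) ℝ) (i : Fin n) :
    EuclideanSpace ℝ (Fin n) :=
  (WithLp.equiv 2 (Fin n → ℝ)).symm (fun k => S k i)

lemma Ginv (n : ℕ) (hn : 2 ≤ n) (α : ℝ) (hα₁ : 0 < α) (hα₂ : α < 1) :
    (Gmat n α)⁻¹ = (1/(1-α)) • (1 : Matrix (Fin n) (Fin n) ℝ)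
      + (-(α/((1-α)*(1+((n:ℝ)-1)*α)))) • (Matrix.of fun _ _ => (1:ℝ)) := by
  have h1 : (1:ℝ) - α ≠ 0 := by linarith
  have hn1 : (1:ℝ) ≤ (n:ℝ) - 1 := by
    have : (2:ℝ) ≤ (n:ℝ) := by exact_mod_cast hn
    linarith
  have ht : (0:ℝ) < 1 + ((n:ℝ)-1)*α := by nlinarith
  set c : ℝ := 1/(1-α) with hc
  set d : ℝ := -(α/((1-α)*(1+((n:ℝ)-1)*α))) with hd
  have hc1 : (1-α)*c = 1 := by rw [hc]; field_simp
  have h2 : (1-α)*d + α*c + α*d*n = 0 := by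
    rw [hc, hd]; field_simp; ring
  apply Matrix.inv_eq_right_inv
  ext i j
  simp only [Gmat, Matrix.mul_apply, Matrix.add_apply, Matrix.smul_apply, Matrix.one_apply,
    Matrix.of_apply, smul_eq_mul]
  rw [Finset.sum_congr rfl (fun k _ => by ring_nf :
    ∀ k ∈ Finset.univ, ((1-α) * (if i = k then (1:ℝ) else 0) + α * 1) *
      (c * (if k = j then (1:ℝ) else 0) + d * 1)
      = (1-α)*c * ((if i = k then (1:ℝ) else 0)*(if k = j then (1:ℝ) else 0))
        + ((1-α)*d) * (if i = k then (1:ℝ) else 0)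
        + (α*c) * (if k = j then (1:ℝ) else 0)
        + α*d)]
  simp only [Finset.sum_add_distrib, ← Finset.mul_sum, Finset.sum_ite_eq, Finset.sum_ite_eq',
    Finset.mem_univ, if_true, Finset.sum_const, Finset.card_univ, Fintype.card_fin,
    nsmul_eq_mul, mul_one, mul_ite, mul_zero]
  by_cases h : i = j <;> simp [h] <;> nlinarith [h2]

/-- The cosine of the angle between the `i`-th column `s_i` of `S` and the
(transpose of the) `i`-th row `s'_i` of `S⁻¹` equals `1/√β`. -/
theorem stmt6 (n : ℕ) (hn : 2 ≤ n) (α : ℝ) (hα₁ : 0 < α) (hα₂ : α < 1)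
    (S : Matrix (Fin n) (Fin n) ℝ) (hS : IsUnit S.det)
    (hEq : Sᵀ * S = Gmat n α) (i : Fin n) :
    ⟪colVec n S i, invRow n S i⟫ / (‖colVec n S i‖ * ‖invRow n S i‖)
      = 1 / Real.sqrt ((1 + ((n : ℝ) - 2) * α)
          / ((1 - α) * (1 + ((n : ℝ) - 1) * α))) := by
  have hinv : S⁻¹ * S = 1 := Matrix.nonsing_inv_mul S hS
  have hinner : ⟪colVec n S i, invRow n S i⟫ = 1 := by
    simp only [colVec, invRow, PiLp.inner_apply, WithLp.equiv_symm_apply, PiLp.toLp_apply,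
      RCLike.inner_apply, conj_trivial]
    have := congrArg (fun M => M i i) hinv
    simp only [Matrix.mul_apply, Matrix.one_apply_eq] at this
    rw [← this]
  have hcol : ‖colVec n S i‖ = 1 := by
    rw [EuclideanSpace.norm_eq]
    have := congrArg (fun M => M i i) hEq
    simp only [Matrix.mul_apply, Gmat, Matrix.add_apply, Matrix.smul_apply,
      Matrix.one_apply_eq, Matrix.of_apply, Matrix.transpose_apply, smul_eq_mul] at this
    simp only [colVec, WithLp.equiv_symm_apply, PiLp.toLp_apply, Real.norm_eq_abs, sq_abs]
    rw [show ∑ k, (S k i)^2 = ∑ k, S k i * S k i from by simp [sq], this]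
    simp
  have hrow : ‖invRow n S i‖ = Real.sqrt ((1 + ((n : ℝ) - 2) * α)
      / ((1 - α) * (1 + ((n : ℝ) - 1) * α))) := by
    rw [EuclideanSpace.norm_eq]
    simp only [invRow, WithLp.equiv_symm_apply, PiLp.toLp_apply, Real.norm_eq_abs, sq_abs]
    have hG : S⁻¹ * (S⁻¹)ᵀ = (Gmat n α)⁻¹ := by
      rw [← hEq, Matrix.mul_inv_rev, Matrix.transpose_nonsing_inv]
    have := congrArg (fun M => M i i) hG
    simp only [Matrix.mul_apply, Matrix.transpose_apply] at this
    have hGii : (Gmat n α)⁻¹ i i = (1 + ((n : ℝ) - 2) * α)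
        / ((1 - α) * (1 + ((n : ℝ) - 1) * α)) := by
      rw [Ginv n hn α hα₁ hα₂]
      have h1 : (1:ℝ) - α ≠ 0 := by linarith
      have hn1 : (1:ℝ) ≤ (n:ℝ) - 1 := by
        have : (2:ℝ) ≤ (n:ℝ) := by exact_mod_cast hn
        linarith
      have ht : (1:ℝ) + ((n:ℝ)-1)*α ≠ 0 := by nlinarith
      simp only [Matrix.add_apply, Matrix.smul_apply, Matrix.one_apply_eq, Matrix.of_apply,
        smul_eq_mul, mul_one]
      field_simp
      ring
    rw [show ∑ k, (S⁻¹ i k)^2 = ∑ k, S⁻¹ i k * S⁻¹ i k from by simp [sq], this, hGii]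
  rw [hinner, hcol, hrow, one_mul]
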